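/- Let p > 2 be a prime, let u_t = (j_t, k_t) ∈ Z_p × Z_p be nonzero, and let u = b·u_t = (b·j_t, b·k_t) with 2 ≤ b < p. Then for every r ∈ Z_p, P_u(r) = P_{u_t}(s), where s = b⁻¹·(r − j_t k_t · C(b,2)) in Z_p, b⁻¹ is the multiplicative inverse of b modulo p, and C(b,2) = b(b−1)/2. -/

import Mathlib

open Matrix

/-- `eta d = exp(2πi/d)`, the primitive `d`-th root of unity. -/
noncomputable def eta (d : ℕ) : ℂ := Complex.exp (2 * Real.pi * Complex.I / d)

/-- The generalized spin matrix `S_{j,k}`, with `(S_{j,k})_{m,n} = η^{mj}` if `n = m + k`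
(mod `d`) and `0` otherwise, exponents computed with representatives `0 ≤ m, j < d`. -/
noncomputable def spin (d : ℕ) [NeZero d] (j k : ZMod d) :
    Matrix (ZMod d) (ZMod d) ℂ :=
  Matrix.of fun m n => if n = m + k then eta d ^ (m.val * j.val) else 0

/-- The projection `P_u(r) = (1/p) Σ_{m=0}^{p-1} (η^r S_u)^m` (for `p` odd the phase
factor `α_u` equals `1`). -/
noncomputable def proj (p : ℕ) [NeZero p] (u : ZMod p × ZMod p) (r : ZMod p) :
    Matrix (ZMod p) (ZMod p) ℂ :=
  (p : ℂ)⁻¹ • ∑ m ∈ Finset.range p, ((eta p ^ r.val) • spin p u.1 u.2) ^ m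

lemma eta_pow_self (d : ℕ) (hd : d ≠ 0) : eta d ^ d = 1 := by
  rw [eta, ← Complex.exp_nat_mul]
  rw [mul_div_cancel₀]
  · exact Complex.exp_two_pi_mul_I
  · exact_mod_cast hd

lemma eta_pow_mod (d : ℕ) (hd : d ≠ 0) (n : ℕ) : eta d ^ n = eta d ^ (n % d) := by
  conv_lhs => rw [← Nat.div_add_mod n d]
  rw [pow_add, pow_mul, eta_pow_self d hd, one_pow, one_mul]

lemma eta_pow_congr (d : ℕ) (hd : d ≠ 0) {m n : ℕ} (h : (m : ZMod d) = n) :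
    eta d ^ m = eta d ^ n := by
  rw [eta_pow_mod d hd m, eta_pow_mod d hd n]
  congr 1
  rwa [ZMod.natCast_eq_natCast_iff, Nat.ModEq] at h

lemma spin_zero (d : ℕ) [NeZero d] : spin d 0 0 = 1 := by
  ext m n
  simp [spin, Matrix.one_apply, eq_comm]

lemma spin_mul (d : ℕ) [NeZero d] (j k j' k' : ZMod d) :
    spin d j k * spin d j' k' =
      eta d ^ (k.val * j'.val) • spin d (j + j') (k + k') := by
  ext m n
  rw [Matrix.mul_apply]
  simp only [spin, Matrix.of_apply, Matrix.smul_apply, smul_eq_mul]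
  rw [Finset.sum_eq_single (m + k)]
  · by_cases h : n = m + (k + k')
    · rw [if_pos rfl, if_pos (by rw [h, add_assoc]), if_pos h, ← pow_add, ← pow_add]
      apply eta_pow_congr d (NeZero.ne d)
      push_cast [ZMod.natCast_val, ZMod.cast_id]
      ring
    · rw [if_pos rfl, if_neg (show ¬ n = m+k+k' by rwa [add_assoc]), if_neg h,
        mul_zero, mul_zero]
  · intro l _ hl
    rw [if_neg hl, zero_mul]
  · simp

lemma spin_pow (d : ℕ) [NeZero d] (j k : ZMod d) (b : ℕ) :
    spin d j k ^ b = eta d ^ (j.val * k.val * b.choose 2) •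
      spin d ((b : ZMod d) * j) ((b : ZMod d) * k) := by
  induction b with
  | zero => simp [spin_zero]
  | succ b ih =>
    rw [pow_succ, ih, Matrix.smul_mul, spin_mul, smul_smul, ← pow_add]
    have h1 : ((b + 1 : ℕ) : ZMod d) * j = (b : ZMod d) * j + j := by push_cast; ring
    have h2 : ((b + 1 : ℕ) : ZMod d) * k = (b : ZMod d) * k + k := by push_cast; ring
    rw [h1, h2]
    congr 1
    apply eta_pow_congr d (NeZero.ne d)
    rw [Nat.choose_succ_succ, Nat.choose_one_right]
    push_cast [ZMod.natCast_val, ZMod.cast_id]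
    ring

lemma pow_mod_of_pow_eq_one {M : Type*} [Monoid M] {A : M} {p : ℕ} (hA : A ^ p = 1)
    (n : ℕ) : A ^ n = A ^ (n % p) := by
  conv_lhs => rw [← Nat.div_add_mod n p]
  rw [pow_add, pow_mul, hA, one_pow, one_mul]

lemma sum_range_eq_sum_zmod {M : Type*} [AddCommMonoid M] (p : ℕ) [NeZero p]
    (f : ℕ → M) : ∑ m ∈ Finset.range p, f m = ∑ m : ZMod p, f m.val := by
  refine Finset.sum_nbij' (fun i => ((i : ZMod p))) (fun m => m.val) ?_ ?_ ?_ ?_ ?_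
  · intro a _; exact Finset.mem_univ _
  · intro a _; exact Finset.mem_range.mpr (ZMod.val_lt a)
  · intro a ha; exact ZMod.val_cast_of_lt (Finset.mem_range.mp ha)
  · intro a _; simp [ZMod.natCast_val, ZMod.cast_id]
  · intro a ha; rw [ZMod.val_cast_of_lt (Finset.mem_range.mp ha)]

lemma sum_pow_reindex {M : Type*} [Monoid M] [AddCommMonoid M] (p : ℕ) [Fact p.Prime]
    (A : M) (hA : A ^ p = 1) (b : ℕ) (hb : (b : ZMod p) ≠ 0) :
    ∑ m ∈ Finset.range p, (A ^ b) ^ m = ∑ m ∈ Finset.range p, A ^ m := by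
  rw [sum_range_eq_sum_zmod, sum_range_eq_sum_zmod]
  have key : ∀ m : ZMod p, (A ^ b) ^ m.val = A ^ (((b : ZMod p) * m).val) := by
    intro m
    rw [← pow_mul, pow_mod_of_pow_eq_one hA]
    congr 1
    have : ((b * m.val : ℕ) : ZMod p) = (b : ZMod p) * m := by
      push_cast [ZMod.natCast_val, ZMod.cast_id]
      ring
    rw [← this, ZMod.val_natCast]
  simp_rw [key]
  exact Fintype.sum_equiv (Equiv.mulLeft₀ (b : ZMod p) hb) _ _ (fun m => rfl)

theorem proj_smul_index (p : ℕ) [Fact p.Prime] (hp : 2 < p)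
    (ut : ZMod p × ZMod p) (hut : ut ≠ 0) (b : ℕ) (hb2 : 2 ≤ b) (hbp : b < p)
    (r : ZMod p) :
    proj p ((b : ZMod p) • ut) r =
      proj p ut ((b : ZMod p)⁻¹ * (r - ut.1 * ut.2 * (b.choose 2 : ZMod p))) := by
  have hp0 : p ≠ 0 := (Fact.out : p.Prime).ne_zero
  set j := ut.1 with hj
  set k := ut.2 with hk
  have hbz : (b : ZMod p) ≠ 0 := by
    rw [Ne, ZMod.natCast_eq_zero_iff]
    intro hdvd
    have := Nat.le_of_dvd (by omega) hdvd
    omega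
  set s : ZMod p := (b : ZMod p)⁻¹ * (r - j * k * (b.choose 2 : ZMod p)) with hs
  set A : Matrix (ZMod p) (ZMod p) ℂ := (eta p ^ s.val) • spin p j k with hA_def
  have hA : A ^ p = 1 := by
    rw [hA_def, smul_pow, spin_pow, ← pow_mul, smul_smul, ← pow_add,
      ZMod.natCast_self, zero_mul, zero_mul, spin_zero]
    have : eta p ^ (s.val * p + j.val * k.val * p.choose 2) = eta p ^ 0 := by
      apply eta_pow_congr p hp0
      have hdvd : p ∣ p.choose 2 :=
        (Fact.out : p.Prime).dvd_choose_self two_ne_zero hp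
      have h2 : ((p.choose 2 : ℕ) : ZMod p) = 0 :=
        (ZMod.natCast_eq_zero_iff _ _).mpr hdvd
      push_cast [ZMod.natCast_self, h2]
      ring
    rw [this, pow_zero, one_smul]
  have hAb : A ^ b = (eta p ^ r.val) • spin p ((b : ZMod p) * j) ((b : ZMod p) * k) := by
    rw [hA_def, smul_pow, spin_pow, ← pow_mul, smul_smul, ← pow_add]
    congr 1
    apply eta_pow_congr p hp0
    push_cast [ZMod.natCast_val, ZMod.cast_id]
    rw [hs]
    field_simp
    ring
  have hfst : ((b : ZMod p) • ut).1 = (b : ZMod p) * j := by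
    rw [Prod.smul_fst, smul_eq_mul, hj]
  have hsnd : ((b : ZMod p) • ut).2 = (b : ZMod p) * k := by
    rw [Prod.smul_snd, smul_eq_mul, hk]
  unfold proj
  congr 1
  rw [hfst, hsnd, ← hAb, ← hA_def]
  exact sum_pow_reindex p A hA b hbz
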